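/- Let 0 ≤ β < 1, m₀ = 0, v₀ = 0, m_t = β m_{t−1} + (1−β) g_t, v_t = v_{t−1} + g_t ⊙ g_t (elementwise square). Then ∑_{t=1}^T ∑_{i=1}^p m_{t,i}² / √(v_{t,i}) ≤ (2/(1−β)²) ∑_{i=1}^p ‖g_{1:T,i}‖, where g_{1:T,i} = (g_{1,i}, …, g_{T,i}) and terms with v_{t,i} = 0 are interpreted as zero. -/

import Mathlib

open Finset Real

/-- Geometric sum bound. -/
lemma geom_bound_aux {β : ℝ} (hβ0 : 0 ≤ β) (hβ1 : β < 1) (n : ℕ) :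
    ∑ k ∈ Finset.range n, β ^ k ≤ 1 / (1 - β) := by
  have h1β : 0 < 1 - β := by linarith
  have hne : β ≠ 1 := by intro h; rw [h] at hβ1; linarith
  rw [geom_sum_eq hne n]
  have h2 : (β ^ n - 1) / (β - 1) = (1 - β ^ n) / (1 - β) := by
    rw [div_eq_div_iff (by linarith) (by linarith)]; ring
  rw [h2, div_le_div_iff₀ h1β h1β]
  have : 0 ≤ β ^ n := pow_nonneg hβ0 n
  nlinarith

/-- Key telescoping bound: `∑ a_t / √(S_t) ≤ 2 √(S_T)` where `S_t` is partial sum. -/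
lemma sum_div_sqrt_le (a : ℕ → ℝ) (ha : ∀ s, 0 ≤ a s) (T : ℕ) :
    ∑ t ∈ Finset.Icc 1 T, a t / Real.sqrt (∑ s ∈ Finset.Icc 1 t, a s) ≤
      2 * Real.sqrt (∑ s ∈ Finset.Icc 1 T, a s) := by
  induction T with
  | zero => simp
  | succ T ih =>
    rw [Finset.sum_Icc_succ_top (by omega), Finset.sum_Icc_succ_top (by omega : 1 ≤ T + 1)]
    set S := ∑ s ∈ Finset.Icc 1 T, a s with hSdef
    have hS : 0 ≤ S := Finset.sum_nonneg fun s _ => ha s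
    have hA : 0 ≤ a (T + 1) := ha _
    have key : 2 * Real.sqrt S + a (T + 1) / Real.sqrt (S + a (T + 1)) ≤
        2 * Real.sqrt (S + a (T + 1)) := by
      rcases eq_or_lt_of_le (by positivity : (0:ℝ) ≤ S + a (T + 1)) with h0 | h0
      · have hS0 : S = 0 := by linarith
        have hA0 : a (T + 1) = 0 := by linarith
        simp [hS0, hA0]
      · have hsq : 0 < Real.sqrt (S + a (T + 1)) := Real.sqrt_pos.mpr h0
        rw [← sub_nonneg]
        have h1 : a (T + 1) / Real.sqrt (S + a (T + 1)) ≤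
            2 * Real.sqrt (S + a (T + 1)) - 2 * Real.sqrt S := by
          rw [div_le_iff₀ hsq]
          have e1 : Real.sqrt (S + a (T + 1)) * Real.sqrt (S + a (T + 1)) =
              S + a (T + 1) := Real.mul_self_sqrt (le_of_lt h0)
          have e2 : 2 * (Real.sqrt S * Real.sqrt (S + a (T + 1))) ≤
              Real.sqrt S ^ 2 + Real.sqrt (S + a (T + 1)) ^ 2 := by
            have := two_mul_le_add_sq (Real.sqrt S) (Real.sqrt (S + a (T + 1)))
            linarith [this]
          have e3 : Real.sqrt S ^ 2 = S := Real.sq_sqrt hS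
          have e4 : Real.sqrt (S + a (T + 1)) ^ 2 = S + a (T + 1) :=
            Real.sq_sqrt (le_of_lt h0)
          nlinarith
        linarith
    calc (∑ t ∈ Finset.Icc 1 T, a t / Real.sqrt (∑ s ∈ Finset.Icc 1 t, a s)) +
          a (T + 1) / Real.sqrt (S + a (T + 1))
        ≤ 2 * Real.sqrt S + a (T + 1) / Real.sqrt (S + a (T + 1)) := by linarith
      _ ≤ 2 * Real.sqrt (S + a (T + 1)) := key

theorem momentum_sum_sq_div_sqrt_le
    (p T : ℕ) (β : ℝ) (hβ0 : 0 ≤ β) (hβ1 : β < 1)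
    (g m v : ℕ → Fin p → ℝ)
    (hm0 : m 0 = 0) (hv0 : v 0 = 0)
    (hm : ∀ t i, m (t + 1) i = β * m t i + (1 - β) * g (t + 1) i)
    (hv : ∀ t i, v (t + 1) i = v t i + g (t + 1) i ^ 2) :
    ∑ t ∈ Finset.Icc 1 T, ∑ i, m t i ^ 2 / Real.sqrt (v t i) ≤
      (2 / (1 - β) ^ 2) * ∑ i, Real.sqrt (∑ t ∈ Finset.Icc 1 T, g t i ^ 2) := by
  have h1β : 0 < 1 - β := by linarith
  -- closed form for v
  have hveq : ∀ t i, v t i = ∑ s ∈ Finset.Icc 1 t, g s i ^ 2 := by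
    intro t i
    induction t with
    | zero => simp [hv0]
    | succ t ih => rw [hv, ih, Finset.sum_Icc_succ_top (by omega)]
  have hvnonneg : ∀ t i, 0 ≤ v t i := fun t i => by
    rw [hveq]; exact Finset.sum_nonneg fun s _ => sq_nonneg _
  have hvmono : ∀ i s t, s ≤ t → v s i ≤ v t i := by
    intro i s t hst
    rw [hveq, hveq]
    exact Finset.sum_le_sum_of_subset_of_nonneg
      (Finset.Icc_subset_Icc_right hst) (fun x _ _ => sq_nonneg _)
  -- closed form for m
  have hmeq : ∀ t i, m t i = (1 - β) * ∑ s ∈ Finset.Icc 1 t, β ^ (t - s) * g s i := by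
    intro t i
    induction t with
    | zero => simp [hm0]
    | succ t ih =>
      rw [hm, ih, Finset.sum_Icc_succ_top (by omega : 1 ≤ t + 1)]
      have : ∑ s ∈ Finset.Icc 1 t, β ^ (t + 1 - s) * g s i =
          β * ∑ s ∈ Finset.Icc 1 t, β ^ (t - s) * g s i := by
        rw [Finset.mul_sum]
        refine Finset.sum_congr rfl fun s hs => ?_
        rw [Finset.mem_Icc] at hs
        have : t + 1 - s = (t - s) + 1 := by omega
        rw [this, pow_succ]; ring
      rw [this]
      simp
      ring
  -- geometric sum over Icc s T
  have hgeomIcc : ∀ s T' : ℕ, ∑ t ∈ Finset.Icc s T', β ^ (t - s) ≤ 1 / (1 - β) := by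
    intro s T'
    rw [← Finset.Ico_add_one_right_eq_Icc, Finset.sum_Ico_eq_sum_range]
    calc ∑ k ∈ Finset.range (T' + 1 - s), β ^ (s + k - s)
        = ∑ k ∈ Finset.range (T' + 1 - s), β ^ k := by
          refine Finset.sum_congr rfl fun k _ => ?_
          congr 1; omega
      _ ≤ 1 / (1 - β) := geom_bound_aux hβ0 hβ1 _
  -- geometric sum, reversed exponent
  have hgeom2 : ∀ t : ℕ, ∑ s ∈ Finset.Icc 1 t, β ^ (t - s) ≤ 1 / (1 - β) := by
    intro t
    induction t with
    | zero =>
      rw [show Finset.Icc 1 0 = ∅ from rfl, Finset.sum_empty]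
      positivity
    | succ t ih =>
      rw [Finset.sum_Icc_succ_top (by omega : 1 ≤ t + 1)]
      have e : ∑ s ∈ Finset.Icc 1 t, β ^ (t + 1 - s) = β * ∑ s ∈ Finset.Icc 1 t, β ^ (t - s) := by
        rw [Finset.mul_sum]
        refine Finset.sum_congr rfl fun s hs => ?_
        rw [Finset.mem_Icc] at hs
        have h' : t + 1 - s = (t - s) + 1 := by omega
        rw [h', pow_succ]; ring
      rw [e]
      have hb : β * ∑ s ∈ Finset.Icc 1 t, β ^ (t - s) ≤ β * (1 / (1 - β)) :=
        mul_le_mul_of_nonneg_left ih hβ0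
      have : β * (1 / (1 - β)) + β ^ (t + 1 - (t + 1)) = 1 / (1 - β) := by
        simp
        field_simp
        ring
      linarith
  -- Step A: m_t^2 ≤ (1-β) ∑ β^{t-s} g_s^2
  have stepA : ∀ t i, m t i ^ 2 ≤ (1 - β) * ∑ s ∈ Finset.Icc 1 t, β ^ (t - s) * g s i ^ 2 := by
    intro t i
    rw [hmeq]
    rw [mul_pow]
    have hcs : (∑ s ∈ Finset.Icc 1 t, β ^ (t - s) * g s i) ^ 2 ≤
        (∑ s ∈ Finset.Icc 1 t, β ^ (t - s)) * ∑ s ∈ Finset.Icc 1 t, β ^ (t - s) * g s i ^ 2 := by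
      have := Finset.sum_mul_sq_le_sq_mul_sq (Finset.Icc 1 t)
        (fun s => Real.sqrt (β ^ (t - s))) (fun s => Real.sqrt (β ^ (t - s)) * g s i)
      have e1 : ∀ s, Real.sqrt (β ^ (t - s)) * (Real.sqrt (β ^ (t - s)) * g s i) =
          β ^ (t - s) * g s i := by
        intro s
        rw [← mul_assoc, Real.mul_self_sqrt (pow_nonneg hβ0 _)]
      have e2 : ∀ s, Real.sqrt (β ^ (t - s)) ^ 2 = β ^ (t - s) :=
        fun s => Real.sq_sqrt (pow_nonneg hβ0 _)
      have e3 : ∀ s, (Real.sqrt (β ^ (t - s)) * g s i) ^ 2 = β ^ (t - s) * g s i ^ 2 := by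
        intro s
        rw [mul_pow, e2]
      simp only [e1, e2, e3] at this
      exact this
    have hgs : ∑ s ∈ Finset.Icc 1 t, β ^ (t - s) ≤ 1 / (1 - β) := hgeom2 t
    have hnn : 0 ≤ ∑ s ∈ Finset.Icc 1 t, β ^ (t - s) * g s i ^ 2 :=
      Finset.sum_nonneg fun s _ => mul_nonneg (pow_nonneg hβ0 _) (sq_nonneg _)
    calc (1 - β) ^ 2 * (∑ s ∈ Finset.Icc 1 t, β ^ (t - s) * g s i) ^ 2
        ≤ (1 - β) ^ 2 * ((1 / (1 - β)) * ∑ s ∈ Finset.Icc 1 t, β ^ (t - s) * g s i ^ 2) := by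
          apply mul_le_mul_of_nonneg_left _ (sq_nonneg _)
          exact hcs.trans (mul_le_mul_of_nonneg_right hgs hnn)
      _ = (1 - β) * ∑ s ∈ Finset.Icc 1 t, β ^ (t - s) * g s i ^ 2 := by
          field_simp
  -- Step B: m_t^2/√v_t ≤ (1-β) ∑_{s≤t} β^{t-s} (g_s^2/√v_s)
  have stepB : ∀ t i, m t i ^ 2 / Real.sqrt (v t i) ≤
      (1 - β) * ∑ s ∈ Finset.Icc 1 t, β ^ (t - s) * (g s i ^ 2 / Real.sqrt (v s i)) := by
    intro t i
    have hRHSnn : 0 ≤ ∑ s ∈ Finset.Icc 1 t, β ^ (t - s) * (g s i ^ 2 / Real.sqrt (v s i)) :=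
      Finset.sum_nonneg fun s _ => mul_nonneg (pow_nonneg hβ0 _)
        (div_nonneg (sq_nonneg _) (Real.sqrt_nonneg _))
    rcases eq_or_lt_of_le (hvnonneg t i) with h0 | h0
    · rw [← h0, Real.sqrt_zero, div_zero]
      positivity
    · have hsqt : 0 < Real.sqrt (v t i) := Real.sqrt_pos.mpr h0
      calc m t i ^ 2 / Real.sqrt (v t i)
          ≤ ((1 - β) * ∑ s ∈ Finset.Icc 1 t, β ^ (t - s) * g s i ^ 2) / Real.sqrt (v t i) := by
            apply div_le_div_of_nonneg_right (stepA t i) hsqt.le |>.trans_eq rfl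
        _ = (1 - β) * ∑ s ∈ Finset.Icc 1 t, β ^ (t - s) * (g s i ^ 2 / Real.sqrt (v t i)) := by
            rw [mul_div_assoc, Finset.sum_div]
            congr 1
            refine Finset.sum_congr rfl fun s _ => ?_
            ring
        _ ≤ (1 - β) * ∑ s ∈ Finset.Icc 1 t, β ^ (t - s) * (g s i ^ 2 / Real.sqrt (v s i)) := by
            apply mul_le_mul_of_nonneg_left _ (le_of_lt h1β)
            refine Finset.sum_le_sum fun s hs => ?_
            rw [Finset.mem_Icc] at hs
            apply mul_le_mul_of_nonneg_left _ (pow_nonneg hβ0 _)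
            rcases eq_or_lt_of_le (hvnonneg s i) with hs0 | hs0
            · -- v s i = 0 forces g s i = 0
              have hgs0 : g s i ^ 2 = 0 := by
                have hs' : s = (s - 1) + 1 := by omega
                have := hv (s - 1) i
                rw [← hs'] at this
                have hnn := hvnonneg (s - 1) i
                nlinarith [hvnonneg s i, sq_nonneg (g s i)]
              simp [hgs0]
            · have hsqs : 0 < Real.sqrt (v s i) := Real.sqrt_pos.mpr hs0
              apply div_le_div_of_nonneg_left (sq_nonneg _) hsqs
              exact Real.sqrt_le_sqrt (hvmono i s t hs.2)
  -- per-coordinate bound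
  have key : ∀ i, ∑ t ∈ Finset.Icc 1 T, m t i ^ 2 / Real.sqrt (v t i) ≤
      2 * Real.sqrt (∑ t ∈ Finset.Icc 1 T, g t i ^ 2) := by
    intro i
    have c1 : ∑ t ∈ Finset.Icc 1 T, m t i ^ 2 / Real.sqrt (v t i) ≤
        (1 - β) * ∑ t ∈ Finset.Icc 1 T, ∑ s ∈ Finset.Icc 1 t,
          β ^ (t - s) * (g s i ^ 2 / Real.sqrt (v s i)) := by
      rw [Finset.mul_sum]
      exact Finset.sum_le_sum fun t _ => stepB t i
    have swap : ∑ t ∈ Finset.Icc 1 T, ∑ s ∈ Finset.Icc 1 t,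
        β ^ (t - s) * (g s i ^ 2 / Real.sqrt (v s i)) =
        ∑ s ∈ Finset.Icc 1 T, (g s i ^ 2 / Real.sqrt (v s i)) *
          ∑ t ∈ Finset.Icc s T, β ^ (t - s) := by
      rw [Finset.sum_comm' (t := fun t => Finset.Icc 1 t) (s' := fun s => Finset.Icc s T)
        (t' := Finset.Icc 1 T) (by intro x y; simp only [Finset.mem_Icc]; omega)]
      refine Finset.sum_congr rfl fun s _ => ?_
      rw [Finset.mul_sum]
      refine Finset.sum_congr rfl fun t _ => ?_
      ring
    have c2 : ∑ s ∈ Finset.Icc 1 T, (g s i ^ 2 / Real.sqrt (v s i)) *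
        ∑ t ∈ Finset.Icc s T, β ^ (t - s) ≤
        (1 / (1 - β)) * ∑ s ∈ Finset.Icc 1 T, g s i ^ 2 / Real.sqrt (v s i) := by
      rw [Finset.mul_sum]
      refine Finset.sum_le_sum fun s _ => ?_
      rw [mul_comm (1 / (1 - β))]
      exact mul_le_mul_of_nonneg_left (hgeomIcc s T)
        (div_nonneg (sq_nonneg _) (Real.sqrt_nonneg _))
    have c3 : ∑ s ∈ Finset.Icc 1 T, g s i ^ 2 / Real.sqrt (v s i) ≤
        2 * Real.sqrt (∑ t ∈ Finset.Icc 1 T, g t i ^ 2) := by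
      have := sum_div_sqrt_le (fun s => g s i ^ 2) (fun s => sq_nonneg _) T
      simp only [← hveq] at this
      convert this using 2
      rw [hveq]
    calc ∑ t ∈ Finset.Icc 1 T, m t i ^ 2 / Real.sqrt (v t i)
        ≤ (1 - β) * ∑ t ∈ Finset.Icc 1 T, ∑ s ∈ Finset.Icc 1 t,
            β ^ (t - s) * (g s i ^ 2 / Real.sqrt (v s i)) := c1
      _ = (1 - β) * ∑ s ∈ Finset.Icc 1 T, (g s i ^ 2 / Real.sqrt (v s i)) *
            ∑ t ∈ Finset.Icc s T, β ^ (t - s) := by rw [swap]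
      _ ≤ (1 - β) * ((1 / (1 - β)) * ∑ s ∈ Finset.Icc 1 T, g s i ^ 2 / Real.sqrt (v s i)) :=
            mul_le_mul_of_nonneg_left c2 (le_of_lt h1β)
      _ = ∑ s ∈ Finset.Icc 1 T, g s i ^ 2 / Real.sqrt (v s i) := by
            field_simp
      _ ≤ 2 * Real.sqrt (∑ t ∈ Finset.Icc 1 T, g t i ^ 2) := c3
  -- combine
  have hsum : ∑ t ∈ Finset.Icc 1 T, ∑ i, m t i ^ 2 / Real.sqrt (v t i) ≤
      2 * ∑ i, Real.sqrt (∑ t ∈ Finset.Icc 1 T, g t i ^ 2) := by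
    rw [Finset.sum_comm, Finset.mul_sum]
    exact Finset.sum_le_sum fun i _ => key i
  have hconst : 2 ≤ 2 / (1 - β) ^ 2 := by
    rw [le_div_iff₀ (by positivity)]
    nlinarith
  have hsqnn : 0 ≤ ∑ i, Real.sqrt (∑ t ∈ Finset.Icc 1 T, g t i ^ 2) :=
    Finset.sum_nonneg fun i _ => Real.sqrt_nonneg _
  calc ∑ t ∈ Finset.Icc 1 T, ∑ i, m t i ^ 2 / Real.sqrt (v t i)
      ≤ 2 * ∑ i, Real.sqrt (∑ t ∈ Finset.Icc 1 T, g t i ^ 2) := hsum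
    _ ≤ (2 / (1 - β) ^ 2) * ∑ i, Real.sqrt (∑ t ∈ Finset.Icc 1 T, g t i ^ 2) :=
        mul_le_mul_of_nonneg_right hconst hsqnn
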